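/- For each ν on the unit circle, the function g_ν(z,w) = (ν(z/2 + w/2) − zw)/(ν − (z/2 + w/2)) maps 𝔻² into 𝔻, satisfies g_ν(λ,λ) = λ for all λ ∈ 𝔻, and satisfies ∂g_ν/∂z(λ,λ) = ∂g_ν/∂w(λ,λ) = 1/2 for all λ ∈ 𝔻. -/

import Mathlib

open Complex ComplexConjugate

/-- For `ν` on the unit circle, the function
`g_ν(z,w) = (ν(z/2 + w/2) − zw)/(ν − (z/2 + w/2))` maps `𝔻²` into `𝔻`, satisfies
`g_ν(λ,λ) = λ` on `𝔻`, and has both diagonal partial derivatives equal to `1/2`. -/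
theorem extremal_bidisk_maps (ν : ℂ) (hν : ‖ν‖ = 1)
    (g : ℂ → ℂ → ℂ)
    (hg : ∀ z w : ℂ, g z w = (ν * (z / 2 + w / 2) - z * w) / (ν - (z / 2 + w / 2))) :
    (∀ z w : ℂ, ‖z‖ < 1 → ‖w‖ < 1 → ‖g z w‖ < 1) ∧
    (∀ l : ℂ, ‖l‖ < 1 → g l l = l) ∧
    (∀ l : ℂ, ‖l‖ < 1 →
      deriv (fun z => g z l) l = 1 / 2 ∧ deriv (fun w => g l w) l = 1 / 2) := by
  have hsn : ∀ z w : ℂ, ‖z‖ < 1 → ‖w‖ < 1 → ‖z / 2 + w / 2‖ < 1 := by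
    intro z w hz hw
    calc ‖z / 2 + w / 2‖ ≤ ‖z / 2‖ + ‖w / 2‖ := norm_add_le _ _
      _ < 1 := by simp only [norm_div, Complex.norm_ofNat]; linarith
  have hden : ∀ z w : ℂ, ‖z‖ < 1 → ‖w‖ < 1 → ν - (z / 2 + w / 2) ≠ 0 := by
    intro z w hz hw h
    have h2 : ν = z / 2 + w / 2 := sub_eq_zero.mp h
    have := hsn z w hz hw
    rw [← h2, hν] at this; linarith
  refine ⟨?_, ?_, ?_⟩
  · intro z w hz hw
    rw [hg, norm_div]
    rw [div_lt_one (norm_pos_iff.mpr (hden z w hz hw))]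
    -- key inequality via normSq
    set s : ℂ := z / 2 + w / 2 with hs
    have hνsq : normSq ν = 1 := by
      have : normSq ν = ‖ν‖ ^ 2 := by rw [normSq_eq_norm_sq]
      rw [this, hν]; norm_num
    have hzz : z * conj z = (normSq z : ℂ) := mul_conj z
    have hww : w * conj w = (normSq w : ℂ) := mul_conj w
    have ht : conj s - s * conj (z * w)
        = (conj z * (1 - (normSq w : ℂ)) + conj w * (1 - (normSq z : ℂ))) / 2 := by
      simp only [hs, map_add, map_div₀, map_mul, Complex.conj_ofNat]
      linear_combination (- conj w / 2) * hzz + (- conj z / 2) * hww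
    obtain ⟨t, htdef⟩ : ∃ t : ℂ, t = conj s - s * conj (z * w) := ⟨_, rfl⟩
    rw [← htdef] at ht
    have hnt : ‖t‖ ≤ (‖z‖ * (1 - ‖w‖ ^ 2) + ‖w‖ * (1 - ‖z‖ ^ 2)) / 2 := by
      rw [ht]
      have h1 : ‖(1 - (normSq w : ℂ))‖ = 1 - ‖w‖ ^ 2 := by
        have : (1 - (normSq w : ℂ)) = ((1 - ‖w‖ ^ 2 : ℝ) : ℂ) := by
          push_cast [normSq_eq_norm_sq]; ring
        rw [this, Complex.norm_real, Real.norm_eq_abs, _root_.abs_of_nonneg]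
        nlinarith [norm_nonneg w]
      have h2 : ‖(1 - (normSq z : ℂ))‖ = 1 - ‖z‖ ^ 2 := by
        have : (1 - (normSq z : ℂ)) = ((1 - ‖z‖ ^ 2 : ℝ) : ℂ) := by
          push_cast [normSq_eq_norm_sq]; ring
        rw [this, Complex.norm_real, Real.norm_eq_abs, _root_.abs_of_nonneg]
        nlinarith [norm_nonneg z]
      calc ‖(conj z * (1 - (normSq w : ℂ)) + conj w * (1 - (normSq z : ℂ))) / 2‖
          ≤ (‖conj z * (1 - (normSq w : ℂ))‖ + ‖conj w * (1 - (normSq z : ℂ))‖) / 2 := by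
            rw [norm_div]; simp only [Complex.norm_ofNat]
            gcongr; exact norm_add_le _ _
        _ = (‖z‖ * (1 - ‖w‖ ^ 2) + ‖w‖ * (1 - ‖z‖ ^ 2)) / 2 := by
            rw [norm_mul, norm_mul, RCLike.norm_conj, RCLike.norm_conj, h1, h2]
    have hre : (ν * t).re ≤ ‖t‖ := by
      calc (ν * t).re ≤ ‖ν * t‖ := Complex.re_le_norm _
        _ = ‖ν * t‖ := rfl
        _ = ‖t‖ := by rw [norm_mul, hν, one_mul]
    have hν' : ν * conj ν = 1 := by
      rw [mul_conj, hνsq]; norm_num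
    have key : ((normSq (ν * s - z * w) : ℝ) : ℂ) - ((normSq (ν - s) : ℝ) : ℂ)
        = ((normSq (z * w) : ℝ) : ℂ) - 1 + ((2 * (ν * t).re : ℝ) : ℂ) := by
      rw [← mul_conj (ν * s - z * w), ← mul_conj (ν - s), ← mul_conj (z * w),
        ← Complex.add_conj (ν * t)]
      simp only [htdef, hs, map_sub, map_mul, map_add, map_div₀, Complex.conj_ofNat, Complex.conj_conj]
      linear_combination ((z / 2 + w / 2) * (conj z / 2 + conj w / 2) - 1) * hν'
    have hexp : normSq (ν * s - z * w) - normSq (ν - s)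
        = normSq (z * w) - 1 + 2 * (ν * t).re := by
      exact_mod_cast key
    have hfin : normSq (ν * s - z * w) < normSq (ν - s) := by
      have hnZW : normSq (z * w) = (‖z‖ * ‖w‖) ^ 2 := by
        rw [normSq_mul, normSq_eq_norm_sq, normSq_eq_norm_sq]; ring
      have h1 : (1 - ‖z‖) * (1 - ‖w‖) * (1 - ‖z‖ * ‖w‖) > 0 := by
        have : ‖z‖ * ‖w‖ < 1 := by nlinarith [norm_nonneg z, norm_nonneg w]
        have hz1 : (0:ℝ) < 1 - ‖z‖ := by linarith
        have hw1 : (0:ℝ) < 1 - ‖w‖ := by linarith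
        exact mul_pos (mul_pos hz1 hw1) (by linarith)
      nlinarith [hexp, hre, hnt, hnZW]
    have e1 : normSq (ν * s - z * w) = ‖ν * s - z * w‖ ^ 2 := by
      rw [normSq_eq_norm_sq]
    have e2 : normSq (ν - s) = ‖ν - s‖ ^ 2 := by rw [normSq_eq_norm_sq]
    rw [e1, e2] at hfin
    nlinarith [norm_nonneg (ν * s - z * w), norm_nonneg (ν - s)]
  · intro l hl
    have hne : ν - (l / 2 + l / 2) ≠ 0 := hden l l hl hl
    have hne2 : ν - l ≠ 0 := by
      intro h; apply hne; rw [sub_eq_zero] at h ⊢; rw [← h]; ring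
    rw [hg, show (l / 2 + l / 2 : ℂ) = l by ring, div_eq_iff hne2]
    ring
  · intro l hl
    have hne : ν - (l / 2 + l / 2) ≠ 0 := hden l l hl hl
    have hne' : ν - l ≠ 0 := by
      intro h; apply hne; rw [sub_eq_zero] at h ⊢; rw [← h]; ring
    constructor
    · have hN : HasDerivAt (fun z : ℂ => ν * (z / 2 + l / 2) - z * l) (ν * (1 / 2) - l) l := by
        have h1 : HasDerivAt (fun z : ℂ => ν * (z / 2 + l / 2)) (ν * (1 / 2)) l :=
          (((hasDerivAt_id l).div_const 2).add_const (l / 2)).const_mul ν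
        have h2 : HasDerivAt (fun z : ℂ => z * l) l l := by
          simpa using (hasDerivAt_id l).mul_const l
        simpa using h1.fun_sub h2
      have hD : HasDerivAt (fun z : ℂ => ν - (z / 2 + l / 2)) (-(1 / 2)) l := by
        have h1 : HasDerivAt (fun z : ℂ => z / 2 + l / 2) ((1:ℂ) / 2) l := by
          simpa using ((hasDerivAt_id l).div_const 2).add_const (l / 2)
        simpa using h1.const_sub ν
      have := (hN.fun_div hD hne).deriv
      simp only [hg]
      rw [this]
      rw [div_eq_iff (pow_ne_zero 2 hne)]
      ring
    · have hN : HasDerivAt (fun w : ℂ => ν * (l / 2 + w / 2) - l * w) (ν * (1 / 2) - l) l := by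
        have h1 : HasDerivAt (fun w : ℂ => ν * (l / 2 + w / 2)) (ν * (1 / 2)) l := by
          have : HasDerivAt (fun w : ℂ => l / 2 + w / 2) ((1:ℂ) / 2) l := by
            simpa using (((hasDerivAt_id l).div_const 2).const_add (l / 2))
          simpa using this.const_mul ν
        have h2 : HasDerivAt (fun w : ℂ => l * w) l l := by
          simpa using (hasDerivAt_id l).const_mul l
        simpa using h1.fun_sub h2
      have hD : HasDerivAt (fun w : ℂ => ν - (l / 2 + w / 2)) (-(1 / 2)) l := by
        have h1 : HasDerivAt (fun w : ℂ => l / 2 + w / 2) ((1:ℂ) / 2) l := by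
          simpa using (((hasDerivAt_id l).div_const 2).const_add (l / 2))
        simpa using h1.const_sub ν
      have := (hN.fun_div hD hne).deriv
      simp only [hg]
      rw [this]
      rw [div_eq_iff (pow_ne_zero 2 hne)]
      ring
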